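/- (Sandwich Lemma) Let φ : ℝⁿ → ℝⁿ be a bijection with φ(0) = 0 satisfying K₁‖x₁ − x₂‖ ≤ ‖φ(x₁) − φ(x₂)‖ ≤ K₂‖x₁ − x₂‖ for all x₁, x₂ (with 0 < K₁ ≤ K₂). Let A ⊆ ℝⁿ with 0 ∈ closure(A), and let d ≥ 1, K > 0. Then ST_d(φ(A); K·K₁/K₂^d) ⊆ φ(ST_d(A;K)) ⊆ ST_d(φ(A); K·K₂/K₁^d), where ST_d(B;C) = {x : dist(x,B) ≤ C‖x‖^d}. -/

import Mathlib

open Filter Metric Topology MeasureTheory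

noncomputable section

abbrev E (n : ℕ) := EuclideanSpace ℝ (Fin n)

/-- Direction set of `A` at the origin. -/
def Dir (n : ℕ) (A : Set (E n)) : Set (E n) :=
  {a | ‖a‖ = 1 ∧ ∃ x : ℕ → E n, (∀ i, x i ∈ A \ {0}) ∧
    Tendsto x atTop (nhds (0 : E n)) ∧
    Tendsto (fun i => (‖x i‖)⁻¹ • x i) atTop (nhds a)}

/-- Sea-tangle neighbourhood of degree `d` and width `C`. -/
def STg (n : ℕ) (d C : ℝ) (A : Set (E n)) : Set (E n) :=
  {x | Metric.infDist x A ≤ C * ‖x‖ ^ d}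

/-- Cone over the direction set (real tangent cone). -/
def LD (n : ℕ) (A : Set (E n)) : Set (E n) :=
  {x | ∃ a ∈ Dir n A, ∃ t : ℝ, 0 ≤ t ∧ x = t • a}

/-- Sequence selection property. -/
def SSP (n : ℕ) (S : Set (E n)) : Prop :=
  ∀ a : ℕ → E n, (∀ m, a m ≠ 0) → Tendsto a atTop (nhds (0 : E n)) →
    (∃ L ∈ Dir n S, Tendsto (fun m => (‖a m‖)⁻¹ • a m) atTop (nhds L)) →
    ∀ ε > (0:ℝ), ∃ b : ℕ → E n, (∀ m, b m ∈ S) ∧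
      ∀ᶠ m in atTop, ‖a m - b m‖ ≤ ε * min ‖a m‖ ‖b m‖

/-- ST-equivalence of set-germs at the origin. -/
def STEquiv (n : ℕ) (A B : Set (E n)) : Prop :=
  ∃ d₁ > (1:ℝ), ∃ C₁ > (0:ℝ), ∃ d₂ > (1:ℝ), ∃ C₂ > (0:ℝ), ∃ ε > (0:ℝ),
    B ∩ ball (0 : E n) ε ⊆ STg n d₁ C₁ A ∧ A ∩ ball (0 : E n) ε ⊆ STg n d₂ C₂ B

theorem stmt2 (n : ℕ) (φ : E n → E n) (hbij : Function.Bijective φ) (hφ0 : φ 0 = 0)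
    (K₁ K₂ : ℝ) (hK₁ : 0 < K₁) (hK : K₁ ≤ K₂)
    (hlip : ∀ x y : E n, K₁ * ‖x - y‖ ≤ ‖φ x - φ y‖ ∧ ‖φ x - φ y‖ ≤ K₂ * ‖x - y‖)
    (A : Set (E n)) (h0 : (0 : E n) ∈ closure A) (d K : ℝ) (hd : 1 ≤ d) (hKpos : 0 < K) :
    STg n d (K * K₁ / K₂ ^ d) (φ '' A) ⊆ φ '' (STg n d K A) ∧
    φ '' (STg n d K A) ⊆ STg n d (K * K₂ / K₁ ^ d) (φ '' A) := by
  have hK₂ : 0 < K₂ := hK₁.trans_le hK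
  have hAne : A.Nonempty := by
    rcases closure_nonempty_iff.mp ⟨0, h0⟩ with h; exact h
  have hd0 : (0:ℝ) ≤ d := le_trans zero_le_one hd
  have hK₁d : (0:ℝ) < K₁ ^ d := Real.rpow_pos_of_pos hK₁ d
  have hK₂d : (0:ℝ) < K₂ ^ d := Real.rpow_pos_of_pos hK₂ d
  -- key distance comparisons
  have key : ∀ x : E n, K₁ * infDist x A ≤ infDist (φ x) (φ '' A) ∧
      infDist (φ x) (φ '' A) ≤ K₂ * infDist x A := by
    intro x
    constructor
    · by_contra h
      push_neg at h
      obtain ⟨y, ⟨a, ha, rfl⟩, hlt⟩ := (infDist_lt_iff (hAne.image φ)).mp h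
      have h1 : infDist x A ≤ dist x a := infDist_le_dist_of_mem ha
      have h2 : K₁ * dist x a ≤ dist (φ x) (φ a) := by
        rw [dist_eq_norm, dist_eq_norm]; exact (hlip x a).1
      nlinarith [infDist_nonneg (x := x) (s := A)]
    · by_contra h
      push_neg at h
      have h' : infDist (φ x) (φ '' A) / K₂ > infDist x A := by
        rw [gt_iff_lt, lt_div_iff₀ hK₂]; linarith [mul_comm K₂ (infDist x A)]
      obtain ⟨a, ha, hlt⟩ := (infDist_lt_iff hAne).mp h'
      have h1 : infDist (φ x) (φ '' A) ≤ dist (φ x) (φ a) :=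
        infDist_le_dist_of_mem ⟨a, ha, rfl⟩
      have h2 : dist (φ x) (φ a) ≤ K₂ * dist x a := by
        rw [dist_eq_norm, dist_eq_norm]; exact (hlip x a).2
      rw [lt_div_iff₀ hK₂] at hlt
      nlinarith
  -- norm comparisons
  have hnorm : ∀ x : E n, K₁ * ‖x‖ ≤ ‖φ x‖ ∧ ‖φ x‖ ≤ K₂ * ‖x‖ := by
    intro x
    have := hlip x 0
    simpa [hφ0] using this
  constructor
  · rintro y hy
    obtain ⟨x, rfl⟩ := hbij.surjective y
    refine ⟨x, ?_, rfl⟩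
    have h1 : K₁ * infDist x A ≤ infDist (φ x) (φ '' A) := (key x).1
    have h2 : infDist (φ x) (φ '' A) ≤ K * K₁ / K₂ ^ d * ‖φ x‖ ^ d := hy
    have h3 : ‖φ x‖ ≤ K₂ * ‖x‖ := (hnorm x).2
    have h4 : ‖φ x‖ ^ d ≤ (K₂ * ‖x‖) ^ d :=
      Real.rpow_le_rpow (norm_nonneg _) h3 hd0
    rw [Real.mul_rpow hK₂.le (norm_nonneg _)] at h4
    show infDist x A ≤ K * ‖x‖ ^ d
    have h5 : K₁ * infDist x A ≤ K * K₁ / K₂ ^ d * (K₂ ^ d * ‖x‖ ^ d) := by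
      calc K₁ * infDist x A ≤ K * K₁ / K₂ ^ d * ‖φ x‖ ^ d := le_trans h1 h2
        _ ≤ K * K₁ / K₂ ^ d * (K₂ ^ d * ‖x‖ ^ d) := by
            apply mul_le_mul_of_nonneg_left h4; positivity
    have h6 : K * K₁ / K₂ ^ d * (K₂ ^ d * ‖x‖ ^ d) = K₁ * (K * ‖x‖ ^ d) := by
      field_simp
    rw [h6] at h5
    exact le_of_mul_le_mul_left h5 hK₁
  · rintro y ⟨x, hx, rfl⟩
    have h1 : infDist (φ x) (φ '' A) ≤ K₂ * infDist x A := (key x).2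
    have h2 : infDist x A ≤ K * ‖x‖ ^ d := hx
    have h3 : K₁ * ‖x‖ ≤ ‖φ x‖ := (hnorm x).1
    have h4 : (K₁ * ‖x‖) ^ d ≤ ‖φ x‖ ^ d :=
      Real.rpow_le_rpow (by positivity) h3 hd0
    rw [Real.mul_rpow hK₁.le (norm_nonneg _)] at h4
    show infDist (φ x) (φ '' A) ≤ K * K₂ / K₁ ^ d * ‖φ x‖ ^ d
    calc infDist (φ x) (φ '' A) ≤ K₂ * (K * ‖x‖ ^ d) := by
          exact h1.trans (mul_le_mul_of_nonneg_left h2 hK₂.le)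
      _ = K * K₂ / K₁ ^ d * (K₁ ^ d * ‖x‖ ^ d) := by field_simp
      _ ≤ K * K₂ / K₁ ^ d * ‖φ x‖ ^ d := by
          apply mul_le_mul_of_nonneg_left h4; positivity
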